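/- Let G be a real reductive group, r > 4·max{ε, η} with ε, η > 0, and let E ⊂ G be an η-narrow collection of (r, ε)-loxodromic elements. Then E is an (r/4, ε)-Schottky family in G. -/

import Mathlib

open Filter Set

section
variable {V : Type*} [NormedAddCommGroup V] [InnerProductSpace ℝ V]

/-- The metric `d(x,y) = sin ∠(x,y)` on projective space, on nonzero representatives. -/
noncomputable def sinDist (x y : V) : ℝ :=
  Real.sqrt (1 - (inner ℝ x y : ℝ) ^ 2 / (‖x‖ ^ 2 * ‖y‖ ^ 2))

/-- Distance from a projective point to a projective subspace. -/
noncomputable def sinDistSub (x : V) (H : Submodule ℝ V) : ℝ :=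
  sInf {t : ℝ | ∃ y ∈ H, y ≠ 0 ∧ t = sinDist x y}

/-- `g` is proximal with attracting eigenline `ℝv` (eigenvalue `c` of maximal modulus)
and complementary invariant hyperplane `H`. -/
def IsProximalTriple (g : Module.End ℝ V) (c : ℝ) (v : V) (H : Submodule ℝ V) : Prop :=
  v ≠ 0 ∧ c ≠ 0 ∧ g v = c • v ∧ (∀ x ∈ H, g x ∈ H) ∧
    IsCompl (Submodule.span ℝ {v}) H ∧
    ∀ x ∈ H, Tendsto (fun n : ℕ => ‖(g ^ n) x‖ / |c| ^ n) atTop (nhds 0)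

/-- `g` is `(r,ε)`-proximal with data `(c, v, H)`. -/
def IsRPSTriple (r ε : ℝ) (g : Module.End ℝ V) (c : ℝ) (v : V) (H : Submodule ℝ V) : Prop :=
  IsProximalTriple g c v H ∧ 2 * r ≤ sinDistSub v H ∧
    ∀ x y : V, x ≠ 0 → y ≠ 0 → ε ≤ sinDistSub x H → ε ≤ sinDistSub y H →
      sinDist (g x) (g y) ≤ ε * sinDist x y

/-- `E` is an `(r,ε)`-Schottky family. -/
def IsSchottky (r ε : ℝ) (E : Set (Module.End ℝ V)) : Prop :=
  0 < ε ∧ ε ≤ r ∧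
    ∃ (c : E → ℝ) (v : E → V) (H : E → Submodule ℝ V),
      (∀ γ : E, IsRPSTriple r ε γ.1 (c γ) (v γ) (H γ)) ∧
      ∀ γ γ' : E, 6 * r ≤ sinDistSub (v γ) (H γ')

lemma sinDist_nonneg' (x y : V) : 0 ≤ sinDist x y := Real.sqrt_nonneg _

lemma sinDist_comm' (x y : V) : sinDist x y = sinDist y x := by
  unfold sinDist; rw [real_inner_comm, mul_comm]

lemma sinDist_smul_right' (x y : V) {t : ℝ} (ht : t ≠ 0) :
    sinDist x (t • y) = sinDist x y := by
  unfold sinDist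
  rw [real_inner_smul_right, norm_smul, mul_pow, mul_pow, Real.norm_eq_abs, sq_abs,
    show ‖x‖^2 * (t^2 * ‖y‖^2) = t^2 * (‖x‖^2 * ‖y‖^2) by ring,
    mul_div_mul_left _ _ (pow_ne_zero 2 ht)]

lemma sin_tri_alg {p q s A B : ℝ} (hA0 : 0 ≤ A) (hB0 : 0 ≤ B)
    (hA2 : A^2 = 1-p^2) (hB2 : B^2 = 1-q^2)
    (h1 : s - p*q ≤ A*B) (h2 : -(A*B) ≤ s - p*q)
    (hpq1 : p*q ≤ 1) (hpq2 : -1 ≤ p*q) : 1 - s^2 ≤ (A+B)^2 := by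
  have hK0 : 0 ≤ A*B := mul_nonneg hA0 hB0
  have hK2 : (A*B)^2 = (1-p^2)*(1-q^2) := by rw [mul_pow, hA2, hB2]
  have hexp : (A+B)^2 = (1-p^2) + (1-q^2) + 2*(A*B) := by rw [add_sq, hA2, hB2]; ring
  rw [hexp]
  rcases le_or_gt (p*q) (A*B) with hc1 | hc1
  · rcases le_or_gt (-(A*B)) (p*q) with hc2 | hc2
    · nlinarith [hK2, sq_nonneg s, hK0,
        mul_nonneg (sub_nonneg.mpr hc1) (by linarith : (0:ℝ) ≤ A*B + p*q)]
    · have hs2 : (p*q + A*B)^2 ≤ s^2 := by nlinarith [h1]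
      nlinarith [hK2, hs2, hpq2, hK0, mul_nonneg hK0 (by linarith : (0:ℝ) ≤ 1 + p*q + A*B)]
  · have hs2 : (p*q - A*B)^2 ≤ s^2 := by nlinarith [h2]
    nlinarith [hK2, hs2, hpq1, hK0, mul_nonneg hK0 (by linarith : (0:ℝ) ≤ 1 - p*q + A*B)]

lemma sinDist_triangle_unit' {a b c : V} (ha : ‖a‖ = 1) (hb : ‖b‖ = 1) (hc : ‖c‖ = 1) :
    sinDist a c ≤ sinDist a b + sinDist b c := by
  have hsd : ∀ u w : V, ‖u‖ = 1 → ‖w‖ = 1 →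
      sinDist u w = Real.sqrt (1 - (inner ℝ u w : ℝ)^2) := by
    intro u w hu hw; unfold sinDist; rw [hu, hw]; norm_num
  rw [hsd a c ha hc, hsd a b ha hb, hsd b c hb hc]
  set p : ℝ := inner ℝ a b with hp
  set q : ℝ := inner ℝ b c with hq
  set s : ℝ := inner ℝ a c with hs
  have hnorm : ∀ u : V, ‖u‖ = 1 → (inner ℝ u u : ℝ) = 1 := by
    intro u hu; rw [real_inner_self_eq_norm_sq, hu]; norm_num
  have hp1 : p^2 ≤ 1 := by
    have h := real_inner_mul_inner_self_le a b
    rw [hnorm a ha, hnorm b hb] at h; nlinarith [h]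
  have hq1 : q^2 ≤ 1 := by
    have h := real_inner_mul_inner_self_le b c
    rw [hnorm b hb, hnorm c hc] at h; nlinarith [h]
  have hba : (inner ℝ b a : ℝ) = p := real_inner_comm a b
  have hcb : (inner ℝ c b : ℝ) = q := real_inner_comm b c
  have key : (s - p*q)^2 ≤ (1 - p^2) * (1 - q^2) := by
    have h := real_inner_mul_inner_self_le (a - p • b) (c - q • b)
    simp only [inner_sub_left, inner_sub_right, real_inner_smul_left, real_inner_smul_right,
      hnorm a ha, hnorm b hb, hnorm c hc, hba, hcb, ← hp, ← hq, ← hs] at h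
    nlinarith [h]
  set A := Real.sqrt (1 - p^2) with hA
  set B := Real.sqrt (1 - q^2) with hB
  have hA0 : 0 ≤ A := Real.sqrt_nonneg _
  have hB0 : 0 ≤ B := Real.sqrt_nonneg _
  have hA2 : A^2 = 1 - p^2 := Real.sq_sqrt (by nlinarith)
  have hB2 : B^2 = 1 - q^2 := Real.sq_sqrt (by nlinarith)
  have hABsq : (s - p*q)^2 ≤ (A*B)^2 := by rw [mul_pow, hA2, hB2]; exact key
  have habs : |s - p*q| ≤ A*B := by
    have h := Real.sqrt_le_sqrt hABsq
    rwa [Real.sqrt_sq_eq_abs, Real.sqrt_sq (mul_nonneg hA0 hB0)] at h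
  obtain ⟨h2, h1⟩ := abs_le.mp habs
  have hpq1 : p*q ≤ 1 := by nlinarith [sq_nonneg (p - q)]
  have hpq2 : -1 ≤ p*q := by nlinarith [sq_nonneg (p + q)]
  have main : 1 - s^2 ≤ (A+B)^2 := sin_tri_alg hA0 hB0 hA2 hB2 h1 h2 hpq1 hpq2
  calc Real.sqrt (1 - s^2) ≤ Real.sqrt ((A+B)^2) := Real.sqrt_le_sqrt main
    _ = A + B := Real.sqrt_sq (by positivity)

lemma sinDist_triangle' (a b c : V) (ha : a ≠ 0) (hb : b ≠ 0) (hc : c ≠ 0) :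
    sinDist a c ≤ sinDist a b + sinDist b c := by
  have n : ∀ x : V, x ≠ 0 → ‖(‖x‖⁻¹ • x)‖ = 1 := fun x hx => by
    rw [norm_smul, norm_inv, norm_norm, inv_mul_cancel₀ (norm_ne_zero_iff.mpr hx)]
  have e : ∀ x y : V, x ≠ 0 → y ≠ 0 →
      sinDist x y = sinDist (‖x‖⁻¹ • x) (‖y‖⁻¹ • y) := by
    intro x y hx hy
    symm
    rw [sinDist_smul_right' _ _ (inv_ne_zero (norm_ne_zero_iff.mpr hy)),
      sinDist_comm' (‖x‖⁻¹ • x) y,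
      sinDist_smul_right' _ _ (inv_ne_zero (norm_ne_zero_iff.mpr hx)),
      sinDist_comm' y x]
  rw [e a c ha hc, e a b ha hb, e b c hb hc]
  exact sinDist_triangle_unit' (n a ha) (n b hb) (n c hc)

end

section
variable {V : Type*} [NormedAddCommGroup V] [InnerProductSpace ℝ V]

lemma bddBelow_sinDistSet' (x : V) (H : Submodule ℝ V) :
    BddBelow {t : ℝ | ∃ y ∈ H, y ≠ 0 ∧ t = sinDist x y} := by
  refine ⟨0, ?_⟩
  rintro t ⟨y, _, _, rfl⟩
  exact sinDist_nonneg' x y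

lemma exists_ne_zero_of_sinDistSub_pos' {x : V} {H : Submodule ℝ V}
    (h : 0 < sinDistSub x H) : ∃ y ∈ H, y ≠ 0 := by
  by_contra hcon
  push_neg at hcon
  have hemp : {t : ℝ | ∃ y ∈ H, y ≠ 0 ∧ t = sinDist x y} = ∅ := by
    ext t
    simp only [Set.mem_setOf_eq, Set.mem_empty_iff_false, iff_false]
    rintro ⟨y, hy, hy0, _⟩
    exact hy0 (hcon y hy)
  rw [sinDistSub, hemp, Real.sInf_empty] at h
  exact lt_irrefl 0 h

lemma sinDistSub_le' {x : V} {H : Submodule ℝ V} {y : V} (hy : y ∈ H) (hy0 : y ≠ 0) :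
    sinDistSub x H ≤ sinDist x y :=
  csInf_le (bddBelow_sinDistSet' x H) ⟨y, hy, hy0, rfl⟩

lemma le_sinDistSub' {x : V} {H : Submodule ℝ V} {b : ℝ}
    (hne : ∃ y ∈ H, y ≠ 0)
    (h : ∀ y ∈ H, y ≠ 0 → b ≤ sinDist x y) : b ≤ sinDistSub x H := by
  apply le_csInf
  · obtain ⟨y, hy, hy0⟩ := hne
    exact ⟨_, y, hy, hy0, rfl⟩
  · rintro t ⟨y, hy, hy0, rfl⟩
    exact h y hy hy0

lemma exists_sinDist_lt' {x : V} {H : Submodule ℝ V} {b : ℝ}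
    (hne : ∃ y ∈ H, y ≠ 0) (h : sinDistSub x H < b) :
    ∃ z ∈ H, z ≠ 0 ∧ sinDist x z < b := by
  obtain ⟨y, hy, hy0⟩ := hne
  obtain ⟨t, ⟨z, hz, hz0, rfl⟩, ht⟩ :=
    exists_lt_of_csInf_lt (s := {t : ℝ | ∃ y ∈ H, y ≠ 0 ∧ t = sinDist x y})
      ⟨_, y, hy, hy0, rfl⟩ h
  exact ⟨z, hz, hz0, ht⟩

end



/-- let `G` be a (real reductive) group together with its distinguished
proximal irreducible representations `ρ_i : G → GL(V_i)`, `i = 1, …, d_S`.  If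
`r > 4·max{ε, η}` with `ε, η > 0` and `E ⊆ G` is an `η`-narrow collection of
`(r,ε)`-loxodromic elements (i.e. each `ρ_i(g)`, `g ∈ E`, is `(r,ε)`-proximal, the
attracting points are pairwise within distance `η` and the repelling hyperplanes pairwise
within Hausdorff distance `η` in each `P(V_i)`), then `E` is an `(r/4, ε)`-Schottky family
in `G`, i.e. each `ρ_i(E)` is an `(r/4, ε)`-Schottky family. -/
theorem narrow_loxodromic_is_schottky
    {G : Type*} [Group G] {m : ℕ}
    (V : Fin m → Type*) [∀ i, NormedAddCommGroup (V i)] [∀ i, InnerProductSpace ℝ (V i)]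
    [∀ i, FiniteDimensional ℝ (V i)]
    (ρ : ∀ i : Fin m, G →* Module.End ℝ (V i))
    (r ε η : ℝ) (hε : 0 < ε) (hη : 0 < η) (hr : 4 * max ε η < r)
    (E : Set G)
    (c : ∀ i : Fin m, E → ℝ) (v : ∀ i : Fin m, (g : E) → V i)
    (H : ∀ i : Fin m, E → Submodule ℝ (V i))
    -- every element of `E` is `(r,ε)`-loxodromic, with the data `(c, v, H)`
    (hlox : ∀ (i : Fin m) (g : E), IsRPSTriple r ε (ρ i g.1) (c i g) (v i g) (H i g))
    -- `η`-narrowness of the attracting points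
    (hnarrow_v : ∀ (i : Fin m) (g g' : E), sinDist (v i g) (v i g') ≤ η)
    -- `η`-narrowness (Hausdorff) of the repelling hyperplanes
    (hnarrow_H : ∀ (i : Fin m) (g g' : E), ∀ x ∈ H i g, x ≠ 0 →
      sinDistSub x (H i g') ≤ η) :
    ∀ i : Fin m, IsSchottky (r / 4) ε ((fun g : G => ρ i g) '' E) := by
  intro i
  have hrpos : 0 < r := by
    have h1 : 0 < max ε η := lt_max_of_lt_left hε
    linarith
  have hηr : η < r / 4 := by
    have := le_max_right ε η; linarith
  have hεr : ε ≤ r / 4 := by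
    have := le_max_left ε η; linarith
  have hpre : ∀ γ : ((fun g : G => ρ i g) '' E), ∃ g : E, ρ i g.1 = γ.1 := by
    rintro ⟨_, g, hg, rfl⟩
    exact ⟨⟨g, hg⟩, rfl⟩
  choose pre hpre2 using hpre
  refine ⟨hε, hεr, fun γ => c i (pre γ), fun γ => v i (pre γ), fun γ => H i (pre γ), ?_, ?_⟩
  · intro γ
    have h := hlox i (pre γ)
    rw [hpre2 γ] at h
    exact ⟨h.1, by linarith [h.2.1], h.2.2⟩
  · intro γ γ'
    set g := pre γ with hg
    set g' := pre γ' with hg'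
    obtain ⟨hprox, hsep, _⟩ := hlox i g
    obtain ⟨hprox', hsep', _⟩ := hlox i g'
    have hv : v i g ≠ 0 := hprox.1
    have hne' : ∃ y ∈ H i g', y ≠ 0 :=
      exists_ne_zero_of_sinDistSub_pos' (lt_of_lt_of_le (by linarith) hsep')
    have hne : ∃ z ∈ H i g, z ≠ 0 :=
      exists_ne_zero_of_sinDistSub_pos' (lt_of_lt_of_le (by linarith) hsep)
    apply le_sinDistSub' hne'
    intro y hy hy0
    have hηy : sinDistSub y (H i g) ≤ η := hnarrow_H i g' g y hy hy0
    have step : ∀ δ : ℝ, 0 < δ → 2*r - (η + δ) ≤ sinDist (v i g) y := by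
      intro δ hδ
      obtain ⟨z, hz, hz0, hzlt⟩ :=
        exists_sinDist_lt' hne (lt_of_le_of_lt hηy (by linarith : η < η + δ))
      have h1 : 2*r ≤ sinDist (v i g) z := le_trans hsep (sinDistSub_le' hz hz0)
      have h2 : sinDist (v i g) z ≤ sinDist (v i g) y + sinDist y z :=
        sinDist_triangle' _ _ _ hv hy0 hz0
      linarith
    have final : 2*r - η ≤ sinDist (v i g) y := by
      by_contra hcon
      push_neg at hcon
      have := step ((2*r - η - sinDist (v i g) y)/2) (by linarith)
      linarith
    linarith
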